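/- For every natural number n ≥ 5, the prime-counting function satisfies π(n-1) = 2 + Σ_{k=5}^{n-1} sin((k-1)!·π/k)/sin(π/k). -/

import Mathlib

open Finset

lemma composite_dvd_factorial_sub_one {k : ℕ} (hk : 5 ≤ k) (hnp : ¬ k.Prime) :
    k ∣ Nat.factorial (k - 1) := by
  have hprod : (∏ x ∈ Finset.Ico 1 k, x) = Nat.factorial (k - 1) := by
    have h : Finset.Ico 1 k = Finset.Ico 1 ((k - 1) + 1) := by congr 1; omega
    rw [h, Finset.prod_Ico_id_eq_factorial]
  obtain ⟨a, ha, ha1, hak⟩ := Nat.exists_dvd_of_not_prime2 (by omega) hnp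
  obtain ⟨b, hb⟩ := ha
  have hb1 : 1 < b := by
    rcases Nat.lt_or_ge 1 b with h | h
    · exact h
    · interval_cases b <;> omega
  have hbk : b < k := by
    by_contra h
    push_neg at h
    nlinarith
  by_cases hab : a = b
  · -- k = a^2, a ≥ 3
    subst hab
    have ha3 : 3 ≤ a := by nlinarith
    have h2a : 2 * a < k := by nlinarith
    have hdvd : a * (2 * a) ∣ Nat.factorial (k - 1) := by
      have hsub : ({a, 2 * a} : Finset ℕ) ⊆ Finset.Ico 1 k := by
        intro x hx
        simp only [Finset.mem_insert, Finset.mem_singleton] at hx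
        rcases hx with rfl | rfl <;> simp [Finset.mem_Ico] <;> omega
      have := Finset.prod_dvd_prod_of_subset _ _ (fun x => x) hsub
      rw [Finset.prod_pair (by omega), hprod] at this
      exact this
    refine dvd_trans ?_ hdvd
    exact ⟨2, by rw [hb]; ring⟩
  · have hdvd : a * b ∣ Nat.factorial (k - 1) := by
      have hsub : ({a, b} : Finset ℕ) ⊆ Finset.Ico 1 k := by
        intro x hx
        simp only [Finset.mem_insert, Finset.mem_singleton] at hx
        rcases hx with rfl | rfl <;> simp [Finset.mem_Ico] <;> omega
      have := Finset.prod_dvd_prod_of_subset _ _ (fun x => x) hsub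
      rw [Finset.prod_pair hab, hprod] at this
      exact this
    exact dvd_trans (dvd_of_eq hb) hdvd

lemma term_eq_indicator {k : ℕ} (hk : 5 ≤ k) :
    Real.sin (((Nat.factorial (k - 1)) : ℝ) * Real.pi / k) / Real.sin (Real.pi / k)
      = if k.Prime then (1 : ℝ) else 0 := by
  have hk0 : (k : ℝ) ≠ 0 := by positivity
  have hkpos : (0 : ℝ) < k := by positivity
  have hsinne : Real.sin (Real.pi / k) ≠ 0 := by
    apply ne_of_gt
    apply Real.sin_pos_of_pos_of_lt_pi
    · positivity
    · apply div_lt_self Real.pi_pos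
      exact_mod_cast (by omega : 1 < k)
  by_cases hp : k.Prime
  · rw [if_pos hp]
    -- Wilson: k ∣ (k-1)! + 1
    haveI : Fact k.Prime := ⟨hp⟩
    have hw : ((Nat.factorial (k - 1) : ℕ) : ZMod k) = -1 := ZMod.wilsons_lemma k
    haveI : NeZero k := ⟨by omega⟩
    have hdvd : k ∣ Nat.factorial (k - 1) + 1 := by
      have h0 : ((Nat.factorial (k - 1) + 1 : ℕ) : ZMod k) = 0 := by
        push_cast
        rw [hw]
        ring
      exact (ZMod.natCast_eq_zero_iff _ _).mp h0
    obtain ⟨c, hc⟩ := hdvd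
    have hcodd : Odd c := by
      have heven : 2 ∣ Nat.factorial (k - 1) :=
        Nat.dvd_factorial (by omega) (by omega)
      have hkodd : ¬ 2 ∣ k := by
        intro h
        have := (Nat.prime_dvd_prime_iff_eq Nat.prime_two hp).mp h
        omega
      rcases Nat.even_or_odd c with he | ho
      · exfalso
        obtain ⟨d, hd⟩ := he
        obtain ⟨e, he'⟩ := heven
        have h2 : Nat.factorial (k - 1) + 1 = 2 * (k * d) := by rw [hc, hd]; ring
        omega
      · exact ho
    obtain ⟨d, hd⟩ := hcodd
    have hfact : ((Nat.factorial (k - 1)) : ℝ) = c * k - 1 := by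
      have h1 : (Nat.factorial (k - 1) : ℝ) + 1 = k * c := by exact_mod_cast hc
      nlinarith [h1]
    rw [hfact]
    have harg : ((c : ℝ) * k - 1) * Real.pi / k = (Real.pi - Real.pi / k) + d * (2 * Real.pi) := by
      field_simp
      rw [hd]
      push_cast
      ring
    rw [harg]
    rw [Real.sin_add_nat_mul_two_pi, Real.sin_pi_sub]
    exact div_self hsinne
  · rw [if_neg hp]
    obtain ⟨c, hc⟩ := composite_dvd_factorial_sub_one hk hp
    have hfact : ((Nat.factorial (k - 1)) : ℝ) = k * c := by exact_mod_cast congrArg (Nat.cast : ℕ → ℝ) hc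
    rw [hfact]
    have harg : ((k : ℝ) * c) * Real.pi / k = c * Real.pi := by field_simp
    rw [harg, Real.sin_nat_mul_pi, zero_div]

theorem barrett_counts_primes (n : ℕ) (hn : 5 ≤ n) :
    ((Nat.primeCounting (n - 1) : ℕ) : ℝ)
      = 2 + ∑ k ∈ Finset.Icc 5 (n - 1),
          Real.sin (((Nat.factorial (k - 1)) : ℝ) * Real.pi / k) / Real.sin (Real.pi / k) := by
  set m := n - 1 with hm
  have hm4 : 4 ≤ m := by omega
  have hsum : ∑ k ∈ Finset.Icc 5 m,
      Real.sin (((Nat.factorial (k - 1)) : ℝ) * Real.pi / k) / Real.sin (Real.pi / k)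
      = ∑ k ∈ Finset.Icc 5 m, (if k.Prime then (1 : ℝ) else 0) := by
    apply Finset.sum_congr rfl
    intro k hk
    rw [Finset.mem_Icc] at hk
    exact term_eq_indicator hk.1
  rw [hsum, Finset.sum_boole]
  have hcount : Nat.primeCounting m = 2 + ((Finset.Icc 5 m).filter Nat.Prime).card := by
    rw [Nat.primeCounting, Nat.primeCounting', Nat.count_eq_card_filter_range]
    have hsplit : Finset.range (m + 1) = Finset.Ico 0 5 ∪ Finset.Ico 5 (m + 1) := by
      rw [Finset.range_eq_Ico, Finset.Ico_union_Ico_eq_Ico (by omega) (by omega)]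
    rw [hsplit, Finset.filter_union, Finset.card_union_of_disjoint
      (Finset.disjoint_filter_filter (Finset.Ico_disjoint_Ico_consecutive 0 5 (m + 1)))]
    have h1 : ((Finset.Ico 0 5).filter Nat.Prime).card = 2 := by decide
    have h2 : Finset.Ico 5 (m + 1) = Finset.Icc 5 m := Finset.Ico_add_one_right_eq_Icc 5 m
    rw [h1, h2]
  rw [hcount]
  push_cast
  rfl
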